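/- arXiv:1806.00902 — 2 statements merged into one kernel-verified Lean document; each statement's English description precedes it below -/
import Mathlib

section
/- Let b ∈ L¹(ℝ) be supported in an interval I with ∫ b = 0, and let g ∈ L¹ ∩ L^∞(ℝ) with ‖g‖_{L^∞} ≤ 2 and ‖g‖_{L¹} ≤ 1. Then for ρ ≥ 1 and every x outside the concentric triple Ĩ of I, the ρ-variation of the family {Q_t(b,g)(x)}_{t>0} satisfies V_ρ(Q(b,g))(x) ≤ C ‖b‖_{L¹} (d(x,I) + |I|) / d(x,I)². -/
open MeasureTheory Set ENNReal NNReal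

/-- The ρ-variation norm of a family `a : ι → E` sampled along finite increasing
systems of indices lying in `S`. -/
noncomputable def varNorm {ι E : Type*} [Preorder ι] [SeminormedAddGroup E]
    (ρ : ℝ) (S : Set ι) (a : ι → E) : ℝ≥0∞ :=
  ⨆ (n : ℕ) (t : Fin (n + 1) → ι) (_ : StrictMono t) (_ : ∀ i, t i ∈ S),
    (∑ i : Fin n, (‖a (t i.succ) - a (t i.castSucc)‖₊ : ℝ≥0∞) ^ ρ) ^ (1 / ρ)

/-- The bilinear average over the cube of side `t` centered at `(x,x)`. -/
noncomputable def Qbil (f g : ℝ → ℂ) (t x : ℝ) : ℂ :=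
  ((t : ℂ) ^ 2)⁻¹ *
    ∫ y in Set.Icc (-(t / 2)) (t / 2), ∫ z in Set.Icc (-(t / 2)) (t / 2),
      f (x - y) * g (x - z)

lemma aux_sum_rpow_le {ι : Type*} (s : Finset ι) {ρ : ℝ} (hρ : 1 ≤ ρ) (f : ι → ℝ≥0∞) :
    (∑ i ∈ s, f i ^ ρ) ^ (1/ρ) ≤ ∑ i ∈ s, f i := by
  classical
  induction s using Finset.induction with
  | empty =>
      simp [ENNReal.zero_rpow_of_pos (by positivity : (0:ℝ) < 1/ρ),
        (by linarith : (0:ℝ) < ρ)]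
  | @insert a s h ih =>
      rw [Finset.sum_insert h, Finset.sum_insert h]
      have h1 : (∑ i ∈ s, f i ^ ρ) = (((∑ i ∈ s, f i ^ ρ) ^ (1/ρ)) ^ ρ) := by
        rw [← ENNReal.rpow_mul, one_div, inv_mul_cancel₀ (by linarith : ρ ≠ 0),
          ENNReal.rpow_one]
      calc (f a ^ ρ + ∑ i ∈ s, f i ^ ρ) ^ (1/ρ)
          = (f a ^ ρ + ((∑ i ∈ s, f i ^ ρ) ^ (1/ρ)) ^ ρ) ^ (1/ρ) := by rw [← h1]
        _ ≤ f a + (∑ i ∈ s, f i ^ ρ) ^ (1/ρ) := ENNReal.rpow_add_rpow_le_add _ _ hρ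
        _ ≤ _ := add_le_add le_rfl ih

lemma aux_fin_telescope {n : ℕ} (F : Fin (n+1) → ℝ) :
    ∑ i : Fin n, (F i.succ - F i.castSucc) = F (Fin.last n) - F 0 := by
  set f : ℕ → ℝ := fun k => F ⟨min k n, by omega⟩ with hf
  have h1 : ∀ i : Fin n, F i.succ - F i.castSucc = f (i.1 + 1) - f i.1 := by
    intro i
    have hi := i.2
    have e1 : (⟨min (i.1+1) n, by omega⟩ : Fin (n+1)) = i.succ := by
      ext; simp [Nat.min_eq_left (by omega : i.1 + 1 ≤ n)]
    have e2 : (⟨min i.1 n, by omega⟩ : Fin (n+1)) = i.castSucc := by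
      ext; simp [Nat.min_eq_left (by omega : i.1 ≤ n)]
    simp only [hf, e1, e2]
  calc ∑ i : Fin n, (F i.succ - F i.castSucc) = ∑ i : Fin n, (f (i.1+1) - f i.1) := by
        exact Finset.sum_congr rfl fun i _ => h1 i
    _ = ∑ i ∈ Finset.range n, (f (i+1) - f i) :=
        Fin.sum_univ_eq_sum_range (fun k => f (k+1) - f k) n
    _ = f n - f 0 := Finset.sum_range_sub f n
    _ = F (Fin.last n) - F 0 := by
        congr 1 <;> · simp only [hf]; congr 1; ext; simp

lemma aux_varNorm_le_of_control {ρ : ℝ} (hρ : 1 ≤ ρ) (a : ℝ → ℂ) (Ψ : ℝ → ℝ) (V : ℝ)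
    (hc : ∀ s t : ℝ, 0 < s → s ≤ t → ‖a t - a s‖ ≤ Ψ t - Ψ s)
    (hV : ∀ s t : ℝ, 0 < s → s ≤ t → Ψ t - Ψ s ≤ V) :
    varNorm ρ (Set.Ioi (0:ℝ)) a ≤ ENNReal.ofReal V := by
  rw [varNorm]
  refine iSup_le fun n => iSup_le fun t => iSup_le fun hmono => iSup_le fun hmem => ?_
  calc (∑ i : Fin n, (‖a (t i.succ) - a (t i.castSucc)‖₊ : ℝ≥0∞) ^ ρ) ^ (1/ρ)
      ≤ ∑ i : Fin n, (‖a (t i.succ) - a (t i.castSucc)‖₊ : ℝ≥0∞) :=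
        aux_sum_rpow_le _ hρ _
    _ = ENNReal.ofReal (∑ i : Fin n, ‖a (t i.succ) - a (t i.castSucc)‖) := by
        rw [ENNReal.ofReal_sum_of_nonneg (fun i _ => norm_nonneg _)]
        exact Finset.sum_congr rfl fun i _ => (ofReal_norm _).symm
    _ ≤ ENNReal.ofReal V := by
        refine ENNReal.ofReal_le_ofReal ?_
        calc ∑ i : Fin n, ‖a (t i.succ) - a (t i.castSucc)‖
            ≤ ∑ i : Fin n, (Ψ (t i.succ) - Ψ (t i.castSucc)) := by
              refine Finset.sum_le_sum fun i _ => ?_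
              exact hc _ _ (hmem i.castSucc) (hmono (Fin.castSucc_lt_succ (i := i))).le
          _ = Ψ (t (Fin.last n)) - Ψ (t 0) := aux_fin_telescope (fun i => Ψ (t i))
          _ ≤ V := hV _ _ (hmem 0) (hmono.monotone (Fin.zero_le _))

lemma aux_le_infDist {s : Set ℝ} (hs : s.Nonempty) {x c : ℝ} (h : ∀ y ∈ s, c ≤ dist x y) :
    c ≤ Metric.infDist x s := by
  by_contra hc
  push_neg at hc
  obtain ⟨y, hy, hlt⟩ := (Metric.infDist_lt_iff hs).1 hc
  exact absurd (h y hy) (by linarith)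

lemma aux_phi_ineq {s t D : ℝ} (hs : 0 < s) (hst : s ≤ t) (htD : t ≤ 2*D) :
    (t^2)⁻¹ * (2*(t-s)) + ((s^2)⁻¹ - (t^2)⁻¹) * (2*s)
      ≤ (-(4*D/t^2) - 2/t) - (-(4*D/s^2) - 2/s) := by
  have ht : 0 < t := lt_of_lt_of_le hs hst
  have p1 : (t^2)⁻¹ * (2*(t-s)) ≤ 2/s - 2/t := by
    have h1 : (t^2)⁻¹ ≤ (s*t)⁻¹ := by
      apply inv_anti₀ (by positivity)
      nlinarith
    have h2 : (t^2)⁻¹ * (2*(t-s)) ≤ (s*t)⁻¹ * (2*(t-s)) :=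
      mul_le_mul_of_nonneg_right h1 (by linarith)
    calc (t^2)⁻¹ * (2*(t-s)) ≤ (s*t)⁻¹ * (2*(t-s)) := h2
      _ = 2/s - 2/t := by field_simp
  have p2 : ((s^2)⁻¹ - (t^2)⁻¹) * (2*s) ≤ 4*D/s^2 - 4*D/t^2 := by
    have h1 : (0:ℝ) ≤ (s^2)⁻¹ - (t^2)⁻¹ := by
      have : (t^2)⁻¹ ≤ (s^2)⁻¹ := by
        apply inv_anti₀ (by positivity); nlinarith
      linarith
    have h2 : 2*s ≤ 4*D := by linarith
    calc ((s^2)⁻¹ - (t^2)⁻¹) * (2*s) ≤ ((s^2)⁻¹ - (t^2)⁻¹) * (4*D) :=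
          mul_le_mul_of_nonneg_left h2 h1
      _ = 4*D/s^2 - 4*D/t^2 := by simp only [div_eq_mul_inv]; ring
  linarith

lemma aux_final_ineq {d D : ℝ} (hd0 : 0 < d) (hdD : d ≤ D) :
    4*D/(2*d)^2 + ((-(4*D/(2*D)^2) - 2/(2*D)) - (-(4*D/(2*d)^2) - 2/(2*d))) ≤ 3 * D / d^2 := by
  have hD0 : 0 < D := lt_of_lt_of_le hd0 hdD
  have h1 : 4*D/(2*d)^2 = D/d^2 := by field_simp; ring
  have h2 : -(4*D/(2*D)^2) - 2/(2*D) = -(2/D) := by field_simp; ring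
  have h3 : -(4*D/(2*d)^2) - 2/(2*d) = -(D/d^2) - 1/d := by field_simp; ring
  rw [h2, h3, h1]
  have h4 : 1/d ≤ D/d^2 := by
    rw [div_le_div_iff₀ hd0 (by positivity)]
    nlinarith
  have h5 : (0:ℝ) ≤ 2/D := by positivity
  have h6 : 3 * D / d^2 = 3*(D/d^2) := by ring
  linarith

/-- variation estimate for `Q_t(b,g)` outside the concentric triple of the
supporting interval of a mean-zero atom `b`, with `g ∈ L¹ ∩ L^∞`, `‖g‖_∞ ≤ 2`, `‖g‖₁ ≤ 1`. -/
theorem varNorm_Qbil_atom :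
    ∃ C : ℝ, 0 < C ∧ ∀ ρ : ℝ, 1 ≤ ρ → ∀ (a h : ℝ), 0 < h → ∀ (b g : ℝ → ℂ),
      Integrable b volume → Function.support b ⊆ Set.Ico a (a + h) →
      (∫ y, b y) = 0 →
      Integrable g volume → (∀ᵐ y ∂volume, ‖g y‖ ≤ 2) → (∫ y, ‖g y‖) ≤ 1 →
      ∀ x : ℝ, x ∉ Set.Ico (a - h) (a + 2 * h) →
        varNorm ρ (Set.Ioi (0:ℝ)) (fun t => Qbil b g t x) ≤
          ENNReal.ofReal (C * (∫ y, ‖b y‖) *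
            (Metric.infDist x (Set.Ico a (a + h)) + h) /
              (Metric.infDist x (Set.Ico a (a + h))) ^ 2) := by
  refine ⟨3, by norm_num, ?_⟩
  intro ρ hρ a h hh b g hb hsupp hb0 hg hg2 _hg1 x hx
  set d := Metric.infDist x (Set.Ico a (a + h)) with hdd
  set Nb : ℝ := ∫ y, ‖b y‖ with hNb
  -- geometry
  have hIne : (Set.Ico a (a + h)).Nonempty := ⟨a, by constructor <;> simp <;> linarith⟩
  have hcase : x < a - h ∨ a + 2 * h ≤ x := by
    by_contra hc; push_neg at hc; exact hx ⟨by linarith [hc.1], hc.2⟩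
  have hd_h : h ≤ d := by
    refine aux_le_infDist hIne fun p hp => ?_
    obtain ⟨hp1, hp2⟩ := hp
    rcases hcase with hc | hc
    · rw [Real.dist_eq, abs_of_nonpos (by linarith)]; linarith
    · rw [Real.dist_eq, abs_of_nonneg (by linarith)]; linarith
  have hd0 : 0 < d := lt_of_lt_of_le hh hd_h
  set D : ℝ := d + h with hDdef
  have hdD : d ≤ D := by rw [hDdef]; linarith
  have hD0 : 0 < D := lt_of_lt_of_le hd0 hdD
  have hd_ge : ∀ p ∈ Set.Ico a (a + h), d ≤ dist x p := fun p hp =>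
    Metric.infDist_le_dist_of_mem hp
  have hdist_le : ∀ p ∈ Set.Ico a (a + h), dist x p ≤ D := by
    intro p hp
    obtain ⟨hp1, hp2⟩ := hp
    rcases hcase with hc | hc
    · have hlow : a - x ≤ d := by
        refine aux_le_infDist hIne fun q hq => ?_
        rw [Real.dist_eq, abs_of_nonpos (by linarith [hq.1])]; linarith [hq.1]
      rw [Real.dist_eq, abs_of_nonpos (by linarith)]
      rw [hDdef]; linarith
    · have hlow : x - (a + h) ≤ d := by
        refine aux_le_infDist hIne fun q hq => ?_
        rw [Real.dist_eq, abs_of_nonneg (by linarith [hq.2])]; linarith [hq.2]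
      rw [Real.dist_eq, abs_of_nonneg (by linarith)]
      rw [hDdef]; linarith
  -- the basic objects
  set S : ℝ → Set ℝ := fun t => Set.Icc (-(t/2)) (t/2) with hS
  set Bf : ℝ → ℂ := fun t => ∫ y in S t, b (x - y) with hBf
  set Mf : ℝ → ℝ := fun t => ∫ y in S t, ‖b (x - y)‖ with hMf
  set Gf : ℝ → ℂ := fun t => ∫ z in S t, g (x - z) with hGf
  -- integrability
  have hbx : Integrable (fun y => b (x - y)) volume := hb.comp_sub_left x
  have hbxn : Integrable (fun y => ‖b (x - y)‖) volume := hbx.norm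
  have hgx : Integrable (fun z => g (x - z)) volume := hg.comp_sub_left x
  have hSsub : ∀ s t : ℝ, s ≤ t → S s ⊆ S t := fun s t hst =>
    Set.Icc_subset_Icc (by linarith) (by linarith)
  have hg2x : ∀ᵐ z ∂volume, ‖g (x - z)‖ ≤ 2 :=
    ((Measure.measurePreserving_sub_left volume x).quasiMeasurePreserving).ae hg2
  -- M facts
  have hNb0 : 0 ≤ Nb := by rw [hNb]; exact integral_nonneg fun y => norm_nonneg _
  have hMle : ∀ t, Mf t ≤ Nb := by
    intro t
    calc Mf t ≤ ∫ y, ‖b (x - y)‖ :=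
          setIntegral_le_integral hbxn (ae_of_all _ fun y => norm_nonneg _)
      _ = Nb := by rw [hNb]; exact integral_sub_left_eq_self (fun y => ‖b y‖) volume x
  have hMnonneg : ∀ t, 0 ≤ Mf t := fun t =>
    setIntegral_nonneg measurableSet_Icc fun y _ => norm_nonneg _
  have hMmono : ∀ s t : ℝ, s ≤ t → Mf s ≤ Mf t := fun s t hst =>
    setIntegral_mono_set hbxn.integrableOn
      (ae_of_all _ fun y => norm_nonneg _)
      ((hSsub s t hst).eventuallyLE)
  have hBdiff : ∀ s t : ℝ, s ≤ t → Bf t - Bf s = ∫ y in S t \ S s, b (x - y) := by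
    intro s t hst
    rw [integral_diff measurableSet_Icc hbx.integrableOn (hSsub s t hst)]
  have hMdiff : ∀ s t : ℝ, s ≤ t → Mf t - Mf s = ∫ y in S t \ S s, ‖b (x - y)‖ := by
    intro s t hst
    rw [integral_diff measurableSet_Icc hbxn.integrableOn (hSsub s t hst)]
  have hBM : ∀ s t : ℝ, s ≤ t → ‖Bf t - Bf s‖ ≤ Mf t - Mf s := by
    intro s t hst
    rw [hBdiff s t hst, hMdiff s t hst]
    exact norm_integral_le_integral_norm _
  have hBle : ∀ t, ‖Bf t‖ ≤ Nb := fun t =>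
    le_trans (norm_integral_le_integral_norm _) (hMle t)
  -- B vanishing
  have hBlow : ∀ t : ℝ, t ≤ 2 * d → Bf t = 0 := by
    intro t ht
    show (∫ y in S t, b (x - y)) = 0
    refine integral_eq_zero_of_ae ?_
    rw [Filter.EventuallyEq, ae_iff, Measure.restrict_apply' measurableSet_Icc]
    refine measure_mono_null (fun y hy => ?_) (Set.Finite.measure_zero
      ((Set.finite_singleton d).insert (-d)) volume)
    obtain ⟨hy1, hy2⟩ := hy
    have hmem : x - y ∈ Set.Ico a (a + h) := hsupp (by simpa using hy1)
    have h1 : d ≤ |y| := by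
      have := hd_ge _ hmem
      rwa [Real.dist_eq, show x - (x - y) = y by ring] at this
    have h2 : |y| ≤ d := by
      rw [abs_le]
      obtain ⟨h3, h4⟩ := hy2
      constructor <;> linarith
    have : |y| = d := le_antisymm h2 h1
    rcases abs_eq (le_of_lt hd0) |>.1 this with h5 | h5
    · exact Set.mem_insert_iff.2 (Or.inr (by simp [h5]))
    · exact Set.mem_insert_iff.2 (Or.inl h5)
  have hBhigh : ∀ t : ℝ, 2 * D ≤ t → Bf t = 0 := by
    intro t ht
    show (∫ y in S t, b (x - y)) = 0
    have : ∫ y in S t, b (x - y) = ∫ y, b (x - y) := by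
      refine setIntegral_eq_integral_of_forall_compl_eq_zero fun y hy => ?_
      by_contra hne
      have hmem : x - y ∈ Set.Ico a (a + h) := hsupp (by simpa using hne)
      have h1 : dist x (x - y) ≤ D := hdist_le _ hmem
      rw [Real.dist_eq, show x - (x - y) = y by ring] at h1
      rw [abs_le] at h1
      exact hy ⟨by linarith [h1.1], by linarith [h1.2]⟩
    rw [this, integral_sub_left_eq_self b volume x, hb0]
  -- G facts
  have hvolS : ∀ t : ℝ, 0 ≤ t → volume (S t) = ENNReal.ofReal t := by
    intro t ht
    rw [hS]
    simp only [Real.volume_Icc]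
    congr 1; ring
  have hGnorm : ∀ t : ℝ, 0 ≤ t → ‖Gf t‖ ≤ 2 * t := by
    intro t ht
    calc ‖Gf t‖ ≤ ∫ z in S t, ‖g (x - z)‖ := norm_integral_le_integral_norm _
      _ ≤ ∫ _z in S t, (2:ℝ) := by
          refine setIntegral_mono_ae hgx.norm.integrableOn (integrableOn_const ?_) hg2x
          rw [hvolS t ht]; exact ofReal_ne_top
      _ = 2 * t := by
          rw [setIntegral_const, measureReal_def, hvolS t ht, smul_eq_mul,
            ENNReal.toReal_ofReal ht, mul_comm]
  have hGlip : ∀ s t : ℝ, 0 ≤ s → s ≤ t → ‖Gf t - Gf s‖ ≤ 2 * (t - s) := by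
    intro s t hs hst
    have hdiffG : Gf t - Gf s = ∫ z in S t \ S s, g (x - z) := by
      rw [hGf]
      rw [integral_diff measurableSet_Icc hgx.integrableOn (hSsub s t hst)]
    have hvol : volume (S t \ S s) = ENNReal.ofReal (t - s) := by
      rw [measure_diff (hSsub s t hst) measurableSet_Icc.nullMeasurableSet
        (by rw [hvolS s hs]; exact ofReal_ne_top),
        hvolS s hs, hvolS t (by linarith), ← ENNReal.ofReal_sub _ hs]
    calc ‖Gf t - Gf s‖ = ‖∫ z in S t \ S s, g (x - z)‖ := by rw [hdiffG]
      _ ≤ ∫ z in S t \ S s, ‖g (x - z)‖ := norm_integral_le_integral_norm _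
      _ ≤ ∫ _z in S t \ S s, (2:ℝ) := by
          refine setIntegral_mono_ae (hgx.norm.integrableOn) (integrableOn_const ?_) hg2x
          rw [hvol]; exact ofReal_ne_top
      _ = 2 * (t - s) := by
          rw [setIntegral_const, measureReal_def, hvol, smul_eq_mul,
            ENNReal.toReal_ofReal (by linarith), mul_comm]
  -- Φ and the factorization
  set Φ : ℝ → ℂ := fun r => (((r:ℝ) : ℂ) ^ 2)⁻¹ * Gf r with hΦ
  have hA : ∀ r : ℝ, Qbil b g r x = Φ r * Bf r := by
    intro r
    have e1 : (∫ y in Set.Icc (-(r/2)) (r/2), ∫ z in Set.Icc (-(r/2)) (r/2),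
        b (x - y) * g (x - z))
        = (∫ y in Set.Icc (-(r/2)) (r/2), b (x - y)) *
            ∫ z in Set.Icc (-(r/2)) (r/2), g (x - z) := by
      rw [← integral_mul_const]
      refine integral_congr_ae (ae_of_all _ fun y => ?_)
      exact integral_const_mul _ _
    simp only [Qbil, hΦ, hBf, hGf, hS]
    rw [e1]; ring
  -- F₂ and its monotonicity
  set F₂ : ℝ → ℝ := fun r => -(4*D/r^2) - 2/r with hF₂
  have hF₂mono : ∀ u v : ℝ, 0 < u → u ≤ v → F₂ u ≤ F₂ v := by
    intro u v hu huv
    have hv : 0 < v := lt_of_lt_of_le hu huv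
    have h1 : 4*D/v^2 ≤ 4*D/u^2 :=
      div_le_div_of_nonneg_left (by positivity) (by positivity) (by nlinarith)
    have h2 : 2/v ≤ 2/u :=
      div_le_div_of_nonneg_left (by norm_num) hu huv
    simp only [hF₂]
    linarith
  -- norm of the complex power factor
  have hnormc : ∀ r : ℝ, 0 < r → ‖(((r:ℝ):ℂ)^2)⁻¹‖ = (r^2)⁻¹ := by
    intro r hr
    rw [norm_inv, norm_pow, Complex.norm_real, Real.norm_eq_abs,
      abs_of_pos hr]
  -- Φ difference estimate
  have hΦdiff : ∀ s t : ℝ, 0 < s → s ≤ t → t ≤ 2*D → ‖Φ t - Φ s‖ ≤ F₂ t - F₂ s := by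
    intro s t hs hst htD
    have ht : 0 < t := lt_of_lt_of_le hs hst
    have e : Φ t - Φ s = (((t:ℝ):ℂ)^2)⁻¹ * (Gf t - Gf s)
        + ((((t:ℝ):ℂ)^2)⁻¹ - (((s:ℝ):ℂ)^2)⁻¹) * Gf s := by
      simp only [hΦ]; ring
    have e2 : ‖(((t:ℝ):ℂ)^2)⁻¹ - (((s:ℝ):ℂ)^2)⁻¹‖ = (s^2)⁻¹ - (t^2)⁻¹ := by
      have : (((t:ℝ):ℂ)^2)⁻¹ - (((s:ℝ):ℂ)^2)⁻¹ = ((((t^2)⁻¹ - (s^2)⁻¹ : ℝ)) : ℂ) := by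
        push_cast; ring
      rw [this, Complex.norm_real, Real.norm_eq_abs, abs_of_nonpos]
      · ring
      · have : (t^2)⁻¹ ≤ (s^2)⁻¹ := by
          apply inv_anti₀ (by positivity); nlinarith
        linarith
    calc ‖Φ t - Φ s‖
        ≤ ‖(((t:ℝ):ℂ)^2)⁻¹ * (Gf t - Gf s)‖
          + ‖((((t:ℝ):ℂ)^2)⁻¹ - (((s:ℝ):ℂ)^2)⁻¹) * Gf s‖ := by
          rw [e]; exact norm_add_le _ _
      _ = (t^2)⁻¹ * ‖Gf t - Gf s‖ + ((s^2)⁻¹ - (t^2)⁻¹) * ‖Gf s‖ := by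
          rw [norm_mul, norm_mul, hnormc t ht, e2]
      _ ≤ (t^2)⁻¹ * (2*(t-s)) + ((s^2)⁻¹ - (t^2)⁻¹) * (2*s) := by
          have q1 : (t^2)⁻¹ * ‖Gf t - Gf s‖ ≤ (t^2)⁻¹ * (2*(t-s)) :=
            mul_le_mul_of_nonneg_left (hGlip s t hs.le hst) (by positivity)
          have q0 : (0:ℝ) ≤ (s^2)⁻¹ - (t^2)⁻¹ := by
            have : (t^2)⁻¹ ≤ (s^2)⁻¹ := by
              apply inv_anti₀ (by positivity); nlinarith
            linarith
          have q2 : ((s^2)⁻¹ - (t^2)⁻¹) * ‖Gf s‖ ≤ ((s^2)⁻¹ - (t^2)⁻¹) * (2*s) :=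
            mul_le_mul_of_nonneg_left (hGnorm s hs.le) q0
          linarith
      _ ≤ F₂ t - F₂ s := by
          simpa only [hF₂] using aux_phi_ineq hs hst htD
  -- Φ bound
  set K : ℝ := 4*D/(2*d)^2 with hK
  have hK0 : 0 ≤ K := by rw [hK]; positivity
  have hΦbound : ∀ t : ℝ, 2*d ≤ t → t ≤ 2*D → ‖Φ t‖ ≤ K := by
    intro t h1 h2
    have ht : 0 < t := lt_of_lt_of_le (by linarith) h1
    calc ‖Φ t‖ = (t^2)⁻¹ * ‖Gf t‖ := by rw [hΦ, norm_mul, hnormc t ht]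
      _ ≤ ((2*d)^2)⁻¹ * (4*D) := by
          have q1 : (t^2)⁻¹ ≤ ((2*d)^2)⁻¹ := by
            apply inv_anti₀ (by positivity); nlinarith
          have q2 : ‖Gf t‖ ≤ 4*D := le_trans (hGnorm t ht.le) (by linarith)
          exact mul_le_mul q1 q2 (norm_nonneg _) (by positivity)
      _ = K := by rw [hK, div_eq_mul_inv]; ring
  -- core increment estimate
  have hcore : ∀ s t : ℝ, 2*d ≤ s → s ≤ t → t ≤ 2*D →
      ‖Qbil b g t x - Qbil b g s x‖ ≤ K*(Mf t - Mf s) + Nb*(F₂ t - F₂ s) := by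
    intro s t h1 h2 h3
    rw [hA t, hA s]
    have e : Φ t * Bf t - Φ s * Bf s = Φ t * (Bf t - Bf s) + (Φ t - Φ s) * Bf s := by ring
    calc ‖Φ t * Bf t - Φ s * Bf s‖
        ≤ ‖Φ t * (Bf t - Bf s)‖ + ‖(Φ t - Φ s) * Bf s‖ := by
          rw [e]; exact norm_add_le _ _
      _ ≤ ‖Φ t‖ * ‖Bf t - Bf s‖ + ‖Φ t - Φ s‖ * ‖Bf s‖ :=
          add_le_add (norm_mul_le _ _) (norm_mul_le _ _)
      _ ≤ K*(Mf t - Mf s) + Nb*(F₂ t - F₂ s) := by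
          have q1 : ‖Φ t‖ * ‖Bf t - Bf s‖ ≤ K * (Mf t - Mf s) :=
            mul_le_mul (hΦbound t (by linarith) h3) (hBM s t h2) (norm_nonneg _) hK0
          have hs0 : 0 < s := lt_of_lt_of_le (by linarith) h1
          have q2 : ‖Φ t - Φ s‖ * ‖Bf s‖ ≤ (F₂ t - F₂ s) * Nb :=
            mul_le_mul (hΦdiff s t hs0 h2 h3) (hBle s) (norm_nonneg _)
              (le_trans (norm_nonneg _) (hΦdiff s t hs0 h2 h3))
          linarith [q1, q2, mul_comm (F₂ t - F₂ s) Nb]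
  -- clamp and Ψ
  set cl : ℝ → ℝ := fun r => max (min r (2*D)) (2*d) with hcl
  have hcl_lb : ∀ r, 2*d ≤ cl r := fun r => le_max_right _ _
  have hcl_ub : ∀ r, cl r ≤ 2*D := fun r => max_le (min_le_right _ _) (by linarith)
  have hcl_pos : ∀ r, 0 < cl r := fun r => lt_of_lt_of_le (by linarith) (hcl_lb r)
  have hclmono : ∀ s t : ℝ, s ≤ t → cl s ≤ cl t := fun s t hst =>
    max_le_max (min_le_min_right _ hst) le_rfl
  set Ψ : ℝ → ℝ := fun r => K * Mf r + Nb * F₂ (cl r) with hΨ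
  -- increment control
  have hc : ∀ s t : ℝ, 0 < s → s ≤ t →
      ‖Qbil b g t x - Qbil b g s x‖ ≤ Ψ t - Ψ s := by
    intro s t hs hst
    have hΨincr : ∀ u v : ℝ, u ≤ v → 0 ≤ Ψ v - Ψ u := by
      intro u v huv
      have q1 : Mf u ≤ Mf v := hMmono u v huv
      have q2 : F₂ (cl u) ≤ F₂ (cl v) := hF₂mono _ _ (hcl_pos u) (hclmono u v huv)
      have := mul_le_mul_of_nonneg_left q1 hK0
      have := mul_le_mul_of_nonneg_left q2 hNb0
      simp only [hΨ]; linarith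
    by_cases hta : t ≤ 2*d
    · rw [hA t, hA s, hBlow t hta, hBlow s (by linarith), mul_zero, mul_zero,
        sub_zero, norm_zero]
      exact hΨincr s t hst
    by_cases hsb : 2*D ≤ s
    · rw [hA t, hA s, hBhigh t (by linarith), hBhigh s hsb, mul_zero, mul_zero,
        sub_zero, norm_zero]
      exact hΨincr s t hst
    push_neg at hta hsb
    set s' : ℝ := max s (2*d) with hs'
    set t' : ℝ := min t (2*D) with ht'
    have hs'd : 2*d ≤ s' := le_max_right _ _
    have hs't' : s' ≤ t' := max_le (le_min hst hsb.le) (le_min hta.le (by linarith))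
    have ht'D : t' ≤ 2*D := min_le_right _ _
    have hAs : Qbil b g s x = Qbil b g s' x := by
      rcases le_or_gt (2*d) s with hc1 | hc1
      · rw [hs', max_eq_left hc1]
      · rw [hA s, hA s', hBlow s hc1.le, hBlow s' (le_of_eq (by rw [hs', max_eq_right hc1.le])),
          mul_zero, mul_zero]
    have hAt : Qbil b g t x = Qbil b g t' x := by
      rcases le_or_gt t (2*D) with hc1 | hc1
      · rw [ht', min_eq_left hc1]
      · rw [hA t, hA t', hBhigh t hc1.le, hBhigh t' (ge_of_eq (by rw [ht', min_eq_right hc1.le])),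
          mul_zero, mul_zero]
    rw [hAs, hAt]
    have hcls : cl s = s' := by
      rw [hcl, hs']
      simp only []
      rw [min_eq_left hsb.le]
    have hclt : cl t = t' := by
      rw [hcl, ht']
      simp only []
      rw [max_eq_left]
      exact le_min hta.le (by linarith)
    calc ‖Qbil b g t' x - Qbil b g s' x‖
        ≤ K*(Mf t' - Mf s') + Nb*(F₂ t' - F₂ s') := hcore s' t' hs'd hs't' ht'D
      _ ≤ Ψ t - Ψ s := by
          have q1 : Mf t' ≤ Mf t := hMmono _ _ (min_le_left _ _)
          have q2 : Mf s ≤ Mf s' := hMmono _ _ (le_max_left _ _)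
          have q3 : K*(Mf t' - Mf s') ≤ K*(Mf t - Mf s) :=
            mul_le_mul_of_nonneg_left (by linarith) hK0
          simp only [hΨ, hcls, hclt]
          linarith
  -- total bound
  clear_value d Nb D S Bf Mf Gf Φ F₂ K cl Ψ
  have hV : ∀ s t : ℝ, 0 < s → s ≤ t → Ψ t - Ψ s ≤ 3 * Nb * D / d^2 := by
    intro s t hs hst
    have q1 : K * Mf t ≤ K * Nb := mul_le_mul_of_nonneg_left (hMle t) hK0
    have q2 : 0 ≤ K * Mf s := mul_nonneg hK0 (hMnonneg s)
    have q3 : Nb * F₂ (cl t) ≤ Nb * F₂ (2*D) :=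
      mul_le_mul_of_nonneg_left (hF₂mono _ _ (hcl_pos t) (hcl_ub t)) hNb0
    have q4 : Nb * F₂ (2*d) ≤ Nb * F₂ (cl s) :=
      mul_le_mul_of_nonneg_left (hF₂mono _ _ (by linarith) (hcl_lb s)) hNb0
    have key : K + (F₂ (2*D) - F₂ (2*d)) ≤ 3 * D / d^2 := by
      simpa only [hK, hF₂] using aux_final_ineq hd0 hdD
    have key2 : Nb * (K + (F₂ (2*D) - F₂ (2*d))) ≤ Nb * (3 * D / d^2) :=
      mul_le_mul_of_nonneg_left key hNb0
    have e : Nb * (3 * D / d^2) = 3 * Nb * D / d^2 := by ring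
    simp only [hΨ]
    have e2 : Nb * (K + (F₂ (2*D) - F₂ (2*d))) = Nb*K + (Nb * F₂ (2*D) - Nb * F₂ (2*d)) := by
      ring
    have e3 : K * Nb = Nb * K := mul_comm _ _
    linarith [q1, q2, q3, q4, key2, e, e2, e3]
  -- conclude
  exact aux_varNorm_le_of_control hρ (fun t => Qbil b g t x) Ψ
    (3 * Nb * D / d^2) hc hV
end

section
/- Let φ ∈ S(ℝ²) and φ_t(y,z) = t^{-2}φ(y/t, z/t). Then for ρ ≥ 1 and all y, y', z with |y − y'| ≤ max(|y|,|z|)/2 and (y,z) ≠ (0,0), the ρ-variation regularity bound ‖{φ_t(y,z) − φ_t(y',z)}_{t>0}‖_{V_ρ} ≤ C |y − y'| (|y| + |z|)^{-3} holds, with C depending only on φ. -/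
open MeasureTheory Set ENNReal NNReal

lemma rpow_sum_le_sum_aux {ι : Type*} (s : Finset ι) (f : ι → ℝ≥0∞) {p : ℝ} (hp : 1 ≤ p) :
    (∑ i ∈ s, f i ^ p) ^ (1/p) ≤ ∑ i ∈ s, f i := by
  classical
  have hp0 : 0 < p := lt_of_lt_of_le one_pos hp
  induction s using Finset.induction with
  | empty =>
    simp only [Finset.sum_empty]
    rw [ENNReal.zero_rpow_of_pos (by positivity)]
  | insert a s hx ih =>
    rw [Finset.sum_insert hx, Finset.sum_insert hx]
    calc (f a ^ p + ∑ i ∈ s, f i ^ p) ^ (1/p)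
        = (f a ^ p + ((∑ i ∈ s, f i ^ p) ^ (1/p)) ^ p) ^ (1/p) := by
          rw [← ENNReal.rpow_mul, one_div_mul_cancel hp0.ne', ENNReal.rpow_one]
      _ ≤ f a + (∑ i ∈ s, f i ^ p) ^ (1/p) := ENNReal.rpow_add_rpow_le_add _ _ hp
      _ ≤ f a + ∑ i ∈ s, f i := by gcongr

lemma tele_sum_aux (F : ℝ → ℝ) : ∀ (n : ℕ) (t : Fin (n+1) → ℝ),
    ∑ i : Fin n, (F (t i.castSucc) - F (t i.succ)) = F (t 0) - F (t (Fin.last n)) := by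
  intro n
  induction n with
  | zero => intro t; simp [Fin.last]
  | succ k ih =>
    intro t
    rw [Fin.sum_univ_castSucc]
    have h1 := ih (t ∘ Fin.castSucc)
    simp only [Function.comp] at h1
    simp only [Fin.succ_castSucc] at h1 ⊢
    rw [h1]
    have : (Fin.last k).succ = Fin.last (k+1) := rfl
    rw [this]
    simp [Fin.castSucc_zero]

lemma varNorm_le_of_majorant {E : Type*} [SeminormedAddGroup E]
    {ρ : ℝ} (hρ : 1 ≤ ρ) {S : Set ℝ} (a : ℝ → E) (F : ℝ → ℝ) {B : ℝ}
    (hinc : ∀ s ∈ S, ∀ t ∈ S, s ≤ t → ‖a t - a s‖ ≤ F s - F t)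
    (hFB : ∀ s ∈ S, ∀ t ∈ S, F s - F t ≤ B) :
    varNorm ρ S a ≤ ENNReal.ofReal B := by
  rw [varNorm]
  refine iSup_le fun n => iSup_le fun t => iSup_le fun ht => iSup_le fun htS => ?_
  calc (∑ i : Fin n, (‖a (t i.succ) - a (t i.castSucc)‖₊ : ℝ≥0∞) ^ ρ) ^ (1/ρ)
      ≤ ∑ i : Fin n, (‖a (t i.succ) - a (t i.castSucc)‖₊ : ℝ≥0∞) :=
        rpow_sum_le_sum_aux _ _ hρ
    _ ≤ ∑ i : Fin n, ENNReal.ofReal (F (t i.castSucc) - F (t i.succ)) := by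
        refine Finset.sum_le_sum fun i _ => ?_
        rw [← ENNReal.ofReal_coe_nnreal, coe_nnnorm]
        exact ENNReal.ofReal_le_ofReal
          (hinc _ (htS _) _ (htS _) (le_of_lt (ht (Fin.castSucc_lt_succ (i := i)))))
    _ ≤ ENNReal.ofReal B := by
        rw [← ENNReal.ofReal_sum_of_nonneg]
        · apply ENNReal.ofReal_le_ofReal
          rw [tele_sum_aux]
          exact hFB _ (htS _) _ (htS _)
        · intro i _
          have := hinc _ (htS i.castSucc) _ (htS i.succ) (le_of_lt (ht (Fin.castSucc_lt_succ (i := i))))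
          linarith [norm_nonneg (a (t i.succ) - a (t i.castSucc))]

set_option maxHeartbeats 2000000 in
/-- regularity bound for the ρ-variation of the dilated kernels
`φ_t(y,z) = t⁻² φ(y/t, z/t)` of a Schwartz function `φ ∈ S(ℝ²)`. -/
theorem varNorm_dilated_kernel_regularity (Φ : SchwartzMap (ℝ × ℝ) ℝ) :
    ∃ C : ℝ, 0 < C ∧ ∀ ρ : ℝ, 1 ≤ ρ → ∀ y y' z : ℝ, (y, z) ≠ ((0 : ℝ), (0 : ℝ)) →
      |y - y'| ≤ max |y| |z| / 2 →
      varNorm ρ (Set.Ioi (0:ℝ))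
          (fun t => (t ^ 2)⁻¹ * (Φ (y / t, z / t) - Φ (y' / t, z / t))) ≤
        ENNReal.ofReal (C * |y - y'| / (|y| + |z|) ^ 3) := by
  classical
  set D : ℝ := 2^5 * ((Finset.Iic ((5:ℕ),(2:ℕ))).sup
      (fun m => SchwartzMap.seminorm ℝ m.1 m.2)) Φ + 1 with hDdef
  have hD1 : 1 ≤ D := by
    have : (0:ℝ) ≤ 2^5 * ((Finset.Iic ((5:ℕ),(2:ℕ))).sup
        (fun m => SchwartzMap.seminorm ℝ m.1 m.2)) Φ := by positivity
    simp only [hDdef]; linarith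
  have hD0 : 0 < D := by linarith
  have decay : ∀ (k n : ℕ), k ≤ 5 → n ≤ 2 → ∀ w : ℝ × ℝ,
      (1 + ‖w‖) ^ k * ‖iteratedFDeriv ℝ n (⇑Φ) w‖ ≤ D := by
    intro k n hk hn w
    have := SchwartzMap.one_add_le_sup_seminorm_apply (𝕜 := ℝ) (m := ((5:ℕ),(2:ℕ))) hk hn Φ w
    simp only [hDdef]
    norm_num at this ⊢
    linarith
  have hfd1 : ∀ w : ℝ × ℝ, ‖fderiv ℝ (⇑Φ) w‖ = ‖iteratedFDeriv ℝ 1 (⇑Φ) w‖ := by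
    intro w
    rw [← norm_iteratedFDeriv_fderiv (n := 0), norm_iteratedFDeriv_zero]
  have hfd2 : ∀ w : ℝ × ℝ, ‖fderiv ℝ (fderiv ℝ (⇑Φ)) w‖ = ‖iteratedFDeriv ℝ 2 (⇑Φ) w‖ := by
    intro w
    rw [← norm_iteratedFDeriv_fderiv (n := 1), ← norm_iteratedFDeriv_fderiv (n := 0),
      norm_iteratedFDeriv_zero]
  have hdiffD : Differentiable ℝ (fderiv ℝ (⇑Φ)) :=
    (contDiff_infty_iff_fderiv.mp (Φ.smooth ⊤)).2.differentiable (by simp)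
  refine ⟨150 * D, by positivity, ?_⟩
  intro ρ hρ y y' z hyz hδ
  set δ := |y - y'| with hδdef
  set r := |y| + |z| with hrdef
  have hδ0 : 0 ≤ δ := abs_nonneg _
  have hr : 0 < r := by
    rcases eq_or_lt_of_le (by positivity : (0:ℝ) ≤ r) with h | h
    · exfalso
      apply hyz
      have hay := abs_nonneg y
      have haz := abs_nonneg z
      have hrr : |y| + |z| = 0 := by rw [hrdef] at h; linarith
      have hy0 : y = 0 := abs_eq_zero.mp (by linarith)
      have hz0 : z = 0 := abs_eq_zero.mp (by linarith)
      rw [hy0, hz0]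
    · exact h
  set ψ : ℝ → ℝ := fun t => (t ^ 2)⁻¹ * (Φ (y / t, z / t) - Φ (y' / t, z / t)) with hψdef
  set F : ℝ → ℝ := fun t => 150 * D * δ * ((4*t + r)^3)⁻¹ with hFdef
  -- the segment lower bound
  have hseg : ∀ x : ℝ, 0 < x → ∀ w ∈ segment ℝ ((y'/x, z/x) : ℝ × ℝ) ((y/x, z/x) : ℝ × ℝ),
      4*x + r ≤ 4*x*(1+‖w‖) := by
    intro x hx
    rintro w ⟨a, b, ha, hb, hab, rfl⟩
    have hb1 : b = 1 - a := by linarith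
    have key : r ≤ 4 * max |a*y' + b*y| |z| := by
      have e : a*y' + b*y = y - a*(y-y') := by rw [hb1]; ring
      have h1 : |y| - a*|y-y'| ≤ |a*y' + b*y| := by
        rw [e]
        have h2 := abs_sub_abs_le_abs_sub y (a*(y-y'))
        rw [abs_mul, abs_of_nonneg ha] at h2
        linarith
      have haδ : a*|y-y'| ≤ |y-y'| := by nlinarith [abs_nonneg (y-y')]
      rcases le_total |y| |z| with h | h
      · have hm : max |y| |z| = |z| := max_eq_right h
        have := le_max_right |a*y' + b*y| |z|
        rw [hm] at hδ
        have h0 := abs_nonneg (a*y'+b*y)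
        simp only [hrdef]
        nlinarith
      · have hm : max |y| |z| = |y| := max_eq_left h
        have := le_max_left |a*y' + b*y| |z|
        rw [hm] at hδ
        simp only [hrdef]
        nlinarith
    have hw1 : (a • ((y'/x, z/x) : ℝ × ℝ) + b • ((y/x, z/x) : ℝ × ℝ)) =
        (((a*y' + b*y)/x, z/x) : ℝ × ℝ) := by
      simp only [Prod.smul_mk, Prod.mk_add_mk, smul_eq_mul, Prod.mk.injEq]
      exact ⟨by ring, by rw [← add_mul, hab, one_mul]⟩
    rw [hw1]
    have hnorm : ‖(((a*y' + b*y)/x, z/x) : ℝ × ℝ)‖ = max |a*y' + b*y| |z| / x := by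
      rw [Prod.norm_def]
      simp only [Real.norm_eq_abs]
      rw [abs_div, abs_div, abs_of_pos hx, ← max_div_div_right hx.le]
    rw [hnorm]
    have heq : 4*x*(1 + max |a*y' + b*y| |z| / x) = 4*x + 4*(max |a*y' + b*y| |z|) := by
      field_simp
    rw [heq]
    linarith
  -- decay bounds along good points
  have hE1 : ∀ x : ℝ, 0 < x → ∀ w : ℝ × ℝ, 4*x + r ≤ 4*x*(1+‖w‖) →
      ‖fderiv ℝ (⇑Φ) w‖ ≤ D * (4*x)^4 / (4*x+r)^4 := by
    intro x hx w hw
    have hu : (0:ℝ) < 4*x + r := by linarith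
    have h4 : (4*x+r)^4 ≤ (4*x)^4*(1+‖w‖)^4 := by
      rw [← mul_pow]; exact pow_le_pow_left₀ hu.le hw 4
    have hb := decay 4 1 (by norm_num) (by norm_num) w
    rw [← hfd1 w] at hb
    rw [le_div_iff₀ (by positivity)]
    calc ‖fderiv ℝ (⇑Φ) w‖ * (4*x+r)^4
        ≤ ‖fderiv ℝ (⇑Φ) w‖ * ((4*x)^4*(1+‖w‖)^4) :=
          mul_le_mul_of_nonneg_left h4 (norm_nonneg _)
      _ = (4*x)^4 * ((1+‖w‖)^4 * ‖fderiv ℝ (⇑Φ) w‖) := by ring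
      _ ≤ (4*x)^4 * D := mul_le_mul_of_nonneg_left hb (by positivity)
      _ = D * (4*x)^4 := mul_comm _ _
  have hE2 : ∀ x : ℝ, 0 < x → ∀ w : ℝ × ℝ, 4*x + r ≤ 4*x*(1+‖w‖) →
      ‖fderiv ℝ (fderiv ℝ (⇑Φ)) w‖ ≤ D * (4*x)^5 / (4*x+r)^5 := by
    intro x hx w hw
    have hu : (0:ℝ) < 4*x + r := by linarith
    have h4 : (4*x+r)^5 ≤ (4*x)^5*(1+‖w‖)^5 := by
      rw [← mul_pow]; exact pow_le_pow_left₀ hu.le hw 5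
    have hb := decay 5 2 (by norm_num) (by norm_num) w
    rw [← hfd2 w] at hb
    rw [le_div_iff₀ (by positivity)]
    calc ‖fderiv ℝ (fderiv ℝ (⇑Φ)) w‖ * (4*x+r)^5
        ≤ ‖fderiv ℝ (fderiv ℝ (⇑Φ)) w‖ * ((4*x)^5*(1+‖w‖)^5) :=
          mul_le_mul_of_nonneg_left h4 (by positivity)
      _ = (4*x)^5 * ((1+‖w‖)^5 * ‖fderiv ℝ (fderiv ℝ (⇑Φ)) w‖) := by ring
      _ ≤ (4*x)^5 * D := mul_le_mul_of_nonneg_left hb (by positivity)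
      _ = D * (4*x)^5 := mul_comm _ _
  -- explicit derivative of ψ
  set dψ : ℝ → ℝ := fun x => -(2*x) / ((x^2)^2) * (Φ (y / x, z / x) - Φ (y' / x, z / x)) +
      (x^2)⁻¹ * ((fderiv ℝ (⇑Φ) (y / x, z / x)) (-(y / x^2), -(z / x^2)) -
        (fderiv ℝ (⇑Φ) (y' / x, z / x)) (-(y' / x^2), -(z / x^2))) with hdψdef
  have hasdψ : ∀ x ∈ Ioi (0:ℝ), HasDerivAt ψ (dψ x) x := by
    intro x hx
    have hxpos : (0:ℝ) < x := hx
    have hx0 : x ≠ 0 := hxpos.ne'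
    have hy : HasDerivAt (fun t : ℝ => y / t) (-(y / x^2)) x := by
      simpa [div_eq_mul_inv, mul_neg] using (hasDerivAt_inv hx0).const_mul y
    have hz : HasDerivAt (fun t : ℝ => z / t) (-(z / x^2)) x := by
      simpa [div_eq_mul_inv, mul_neg] using (hasDerivAt_inv hx0).const_mul z
    have hy' : HasDerivAt (fun t : ℝ => y' / t) (-(y' / x^2)) x := by
      simpa [div_eq_mul_inv, mul_neg] using (hasDerivAt_inv hx0).const_mul y'
    have hc : HasDerivAt (fun t : ℝ => (y / t, z / t)) (-(y / x^2), -(z / x^2)) x := hy.prodMk hz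
    have hc' : HasDerivAt (fun t : ℝ => (y' / t, z / t)) (-(y' / x^2), -(z / x^2)) x := hy'.prodMk hz
    have hcomp : HasDerivAt (fun t : ℝ => Φ (y / t, z / t))
        ((fderiv ℝ (⇑Φ) (y / x, z / x)) (-(y / x^2), -(z / x^2))) x :=
      (Φ.differentiable _).hasFDerivAt.comp_hasDerivAt x hc
    have hcomp' : HasDerivAt (fun t : ℝ => Φ (y' / t, z / t))
        ((fderiv ℝ (⇑Φ) (y' / x, z / x)) (-(y' / x^2), -(z / x^2))) x :=
      (Φ.differentiable _).hasFDerivAt.comp_hasDerivAt x hc'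
    have hinv : HasDerivAt (fun t : ℝ => (t^2)⁻¹) (-(2*x) / ((x^2)^2)) x := by
      have h := (hasDerivAt_pow 2 x).inv (pow_ne_zero 2 hx0)
      have e : -(2*x) / ((x^2)^2) = -(((2:ℕ):ℝ) * x ^ (2 - 1)) / (x ^ 2) ^ 2 := by norm_num
      rw [e]
      exact h
    exact hinv.mul (hcomp.sub hcomp')
  -- derivative of F
  have hasdF : ∀ x ∈ Ioi (0:ℝ),
      HasDerivAt F (150 * D * δ * (-(3 * (4*x + r)^2 * 4) / ((4*x + r)^3)^2)) x := by
    intro x hx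
    have hxpos : (0:ℝ) < x := hx
    have hu0 : (4*x + r)^3 ≠ 0 := by positivity
    have hlin : HasDerivAt (fun t : ℝ => 4*t + r) 4 x := by
      simpa using ((hasDerivAt_id x).const_mul 4).add_const r
    have hpow : HasDerivAt (fun t : ℝ => (4*t + r)^3) (3 * (4*x + r)^2 * 4) x := by
      have h := hlin.pow 3
      norm_num at h
      exact h
    exact (hpow.inv hu0).const_mul (150 * D * δ)
  -- the key derivative bound
  have hbound : ∀ x ∈ Ioi (0:ℝ),
      |dψ x| ≤ -(150 * D * δ * (-(3 * (4*x + r)^2 * 4) / ((4*x + r)^3)^2)) := by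
    intro x hx
    have hxpos : (0:ℝ) < x := hx
    have hx0 : x ≠ 0 := hxpos.ne'
    have hu : (0:ℝ) < 4*x + r := by linarith
    have hu0 : (4*x + r) ≠ 0 := hu.ne'
    have hrle : r ≤ 4*x + r := by linarith
    set p : ℝ × ℝ := (y/x, z/x) with hp
    set q : ℝ × ℝ := (y'/x, z/x) with hq
    have hsegpt := hseg x hxpos
    have hqmem : q ∈ segment ℝ q p := left_mem_segment ℝ q p
    have hpmem : p ∈ segment ℝ q p := right_mem_segment ℝ q p
    -- MVT for Φ
    have mvt1 : ‖Φ p - Φ q‖ ≤ (D * (4*x)^4 / (4*x+r)^4) * ‖p - q‖ :=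
      (convex_segment q p).norm_image_sub_le_of_norm_fderiv_le
        (fun w _ => Φ.differentiable w)
        (fun w hw => hE1 x hxpos w (hsegpt w hw)) hqmem hpmem
    -- MVT for fderiv Φ
    have mvt2 : ‖fderiv ℝ (⇑Φ) p - fderiv ℝ (⇑Φ) q‖ ≤ (D * (4*x)^5 / (4*x+r)^5) * ‖p - q‖ :=
      (convex_segment q p).norm_image_sub_le_of_norm_fderiv_le
        (fun w _ => hdiffD w)
        (fun w hw => hE2 x hxpos w (hsegpt w hw)) hqmem hpmem
    have hq1 : ‖fderiv ℝ (⇑Φ) q‖ ≤ D * (4*x)^4 / (4*x+r)^4 := hE1 x hxpos q (hsegpt q hqmem)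
    have hpq : ‖p - q‖ = δ/x := by
      have e : p - q = (((y - y')/x, 0) : ℝ × ℝ) := by
        simp only [hp, hq, Prod.mk_sub_mk, Prod.mk.injEq]
        constructor
        · ring
        · ring
      rw [e, Prod.norm_def]
      simp only [Real.norm_eq_abs, abs_zero]
      rw [max_eq_left (abs_nonneg _), abs_div, abs_of_pos hxpos, hδdef]
    set vp : ℝ × ℝ := (-(y / x^2), -(z / x^2)) with hvp
    set vq : ℝ × ℝ := (-(y' / x^2), -(z / x^2)) with hvq
    have hvpn : ‖vp‖ ≤ r/x^2 := by
      rw [hvp, Prod.norm_def]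
      simp only [Real.norm_eq_abs, abs_neg, abs_div, abs_of_pos (by positivity : (0:ℝ) < x^2)]
      refine max_le ?_ ?_
      · have h1 : |y| ≤ r := by rw [hrdef]; linarith [abs_nonneg z]
        gcongr
      · have h1 : |z| ≤ r := by rw [hrdef]; linarith [abs_nonneg y]
        gcongr
    have hvpqn : ‖vp - vq‖ = δ/x^2 := by
      have e : vp - vq = ((-((y - y')/x^2), 0) : ℝ × ℝ) := by
        simp only [hvp, hvq, Prod.mk_sub_mk, Prod.mk.injEq]
        constructor
        · ring
        · ring
      rw [e, Prod.norm_def]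
      simp only [Real.norm_eq_abs, abs_zero, abs_neg]
      rw [max_eq_left (abs_nonneg _), abs_div, abs_of_pos (by positivity : (0:ℝ) < x^2), hδdef]
    have hT : (fderiv ℝ (⇑Φ) p) vp - (fderiv ℝ (⇑Φ) q) vq =
        (fderiv ℝ (⇑Φ) p - fderiv ℝ (⇑Φ) q) vp + (fderiv ℝ (⇑Φ) q) (vp - vq) := by
      simp only [ContinuousLinearMap.sub_apply, map_sub]
      ring
    have hTn : ‖(fderiv ℝ (⇑Φ) p) vp - (fderiv ℝ (⇑Φ) q) vq‖ ≤
        (D * (4*x)^5 / (4*x+r)^5) * (δ/x) * (r/x^2) + (D * (4*x)^4 / (4*x+r)^4) * (δ/x^2) := by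
      rw [hT]
      refine (norm_add_le _ _).trans (add_le_add ?_ ?_)
      · refine ((fderiv ℝ (⇑Φ) p - fderiv ℝ (⇑Φ) q).le_opNorm vp).trans ?_
        rw [hpq] at mvt2
        exact mul_le_mul mvt2 hvpn (norm_nonneg _) (by positivity)
      · refine ((fderiv ℝ (⇑Φ) q).le_opNorm (vp - vq)).trans ?_
        rw [hvpqn]
        exact mul_le_mul_of_nonneg_right hq1 (by positivity)
    -- assemble
    rw [hpq] at mvt1
    have habs : |dψ x| ≤ 2*x/((x^2)^2) * ((D * (4*x)^4 / (4*x+r)^4) * (δ/x)) +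
        (x^2)⁻¹ * ((D * (4*x)^5 / (4*x+r)^5) * (δ/x) * (r/x^2) +
          (D * (4*x)^4 / (4*x+r)^4) * (δ/x^2)) := by
      rw [hdψdef]
      refine (abs_add_le _ _).trans (add_le_add ?_ ?_)
      · rw [abs_mul, abs_div, abs_neg, abs_of_pos (by positivity : (0:ℝ) < 2*x),
          abs_of_pos (by positivity : (0:ℝ) < (x^2)^2)]
        refine mul_le_mul_of_nonneg_left ?_ (by positivity)
        rw [← Real.norm_eq_abs]
        exact mvt1
      · rw [abs_mul, abs_of_pos (by positivity : (0:ℝ) < (x^2)⁻¹)]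
        refine mul_le_mul_of_nonneg_left ?_ (by positivity)
        rw [← Real.norm_eq_abs]
        exact hTn
    have alg1 : 2*x/((x^2)^2) * ((D * (4*x)^4 / (4*x+r)^4) * (δ/x)) =
        512*D*δ/(4*x+r)^4 := by field_simp; ring
    have alg2 : (x^2)⁻¹ * ((D * (4*x)^5 / (4*x+r)^5) * (δ/x) * (r/x^2) +
        (D * (4*x)^4 / (4*x+r)^4) * (δ/x^2)) =
        1024*D*δ*r/(4*x+r)^5 + 256*D*δ/(4*x+r)^4 := by field_simp; ring
    have alg3 : 1024*D*δ*r/(4*x+r)^5 ≤ 1024*D*δ/(4*x+r)^4 := by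
      have h1 : 1024*D*δ*r/(4*x+r)^5 ≤ 1024*D*δ*(4*x+r)/(4*x+r)^5 := by
        gcongr
      have h2 : 1024*D*δ*(4*x+r)/(4*x+r)^5 = 1024*D*δ/(4*x+r)^4 := by
        field_simp
      linarith
    have alg4 : -(150 * D * δ * (-(3 * (4*x + r)^2 * 4) / ((4*x + r)^3)^2)) =
        1800*D*δ/(4*x+r)^4 := by
      field_simp
      ring
    have hpos : (0:ℝ) ≤ D*δ/(4*x+r)^4 := by positivity
    rw [alg4]
    rw [alg1, alg2] at habs
    have : 512*D*δ/(4*x+r)^4 + (1024*D*δ*r/(4*x+r)^5 + 256*D*δ/(4*x+r)^4) ≤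
        1800*D*δ/(4*x+r)^4 := by
      have e1 : 512*D*δ/(4*x+r)^4 = 512*(D*δ/(4*x+r)^4) := by ring
      have e2 : 256*D*δ/(4*x+r)^4 = 256*(D*δ/(4*x+r)^4) := by ring
      have e3 : 1024*D*δ/(4*x+r)^4 = 1024*(D*δ/(4*x+r)^4) := by ring
      have e4 : 1800*D*δ/(4*x+r)^4 = 1800*(D*δ/(4*x+r)^4) := by ring
      nlinarith [alg3]
    linarith
  have hFB : ∀ s ∈ Ioi (0:ℝ), ∀ t ∈ Ioi (0:ℝ), F s - F t ≤ 150 * D * δ / r^3 := by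
    intro s hs t ht
    have hspos : (0:ℝ) < s := hs
    have htpos : (0:ℝ) < t := ht
    have h150 : (0:ℝ) ≤ 150 * D * δ := mul_nonneg (mul_nonneg (by norm_num) hD0.le) hδ0
    have hFt : 0 ≤ F t := by
      rw [hFdef]
      exact mul_nonneg h150 (inv_nonneg.mpr (pow_nonneg (by linarith) 3))
    have hFs : F s ≤ 150 * D * δ / r^3 := by
      rw [hFdef]
      simp only
      rw [div_eq_mul_inv]
      refine mul_le_mul_of_nonneg_left ?_ h150
      apply inv_anti₀ (by positivity)
      apply pow_le_pow_left₀ hr.le (by linarith)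
    linarith
  clear_value D δ r ψ F dψ
  -- antitonicity of F ± ψ
  have H1 : AntitoneOn (fun t => F t + ψ t) (Ioi (0:ℝ)) := by
    apply antitoneOn_of_deriv_nonpos (convex_Ioi 0)
    · intro x hx
      exact (((hasdF x hx).add (hasdψ x hx)).continuousAt).continuousWithinAt
    · rw [interior_Ioi]
      intro x hx
      exact ((hasdF x hx).add (hasdψ x hx)).differentiableAt.differentiableWithinAt
    · rw [interior_Ioi]
      intro x hx
      rw [show deriv (fun t => F t + ψ t) x = _ from ((hasdF x hx).add (hasdψ x hx)).deriv]
      have h1 := hbound x hx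
      have h2 := le_abs_self (dψ x)
      linarith
  have H2 : AntitoneOn (fun t => F t - ψ t) (Ioi (0:ℝ)) := by
    apply antitoneOn_of_deriv_nonpos (convex_Ioi 0)
    · intro x hx
      exact (((hasdF x hx).sub (hasdψ x hx)).continuousAt).continuousWithinAt
    · rw [interior_Ioi]
      intro x hx
      exact ((hasdF x hx).sub (hasdψ x hx)).differentiableAt.differentiableWithinAt
    · rw [interior_Ioi]
      intro x hx
      rw [show deriv (fun t => F t - ψ t) x = _ from ((hasdF x hx).sub (hasdψ x hx)).deriv]
      have h1 := hbound x hx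
      have h2 := neg_abs_le (dψ x)
      linarith
  -- conclude via the abstract lemma
  have hinc : ∀ s ∈ Ioi (0:ℝ), ∀ t ∈ Ioi (0:ℝ), s ≤ t → ‖ψ t - ψ s‖ ≤ F s - F t := by
    intro s hs t ht hst
    have h1 := H1 hs ht hst
    have h2 := H2 hs ht hst
    simp only at h1 h2
    rw [Real.norm_eq_abs]
    apply abs_le.mpr
    constructor
    · linarith
    · linarith
  calc varNorm ρ (Ioi (0:ℝ)) ψ ≤ ENNReal.ofReal (150 * D * δ / r^3) :=
        varNorm_le_of_majorant hρ ψ F hinc hFB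
    _ ≤ ENNReal.ofReal (150 * D * δ / r ^ 3) := le_refl _
end
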